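/- The class of finite structures over the empty vocabulary is not definable in SCL: there is no SCL sentence φ over the empty vocabulary such that for every structure 𝔄 over the empty vocabulary, 𝔄 ⊨ φ (in unbounded semantics) if and only if the domain of 𝔄 is finite. Since this class is definable in universal second-order logic and every SCL formula is equivalent to a ∀SO formula, SCL is strictly less expressive than ∀SO. -/

import Mathlib

/-
Common formalization of the logics SCL (static computation logic, unbounded
game-theoretic semantics) and BndSCL (bounded semantics), following the paper
"First-order logic with self-reference".

* Games are played on arbitrary (possibly infinite) arenas; plays are maximal
  walks; strategies are functions from finite walks (histories) to positions;
  infinite plays, and finite plays ending at a dead end where `win` holds for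
  neither player, are won by nobody.
* The semantic games are formalized with positions carrying the current
  (sub)formula, an environment binding each label symbol to the labelled
  formula it most recently named (this is the standard closure rendering of
  "reference formula of a claim-symbol occurrence"), the current assignment
  and the polarity (+ = true, − = false).  The bounded game additionally
  carries a clock value.
-/

set_option autoImplicit false

universe u

/-! ## Generic two-player games on (possibly infinite) arenas -/

inductive Player : Type
  | eloise : Player
  | abelard : Player
deriving DecidableEq

def Player.opp : Player → Player
  | .eloise => .abelard
  | .abelard => .eloise

/-- A game arena: an ownership function (corresponding to the partition
`V = V₀ ∪ V₁`), an edge relation, and a predicate telling which player (if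
any) wins a play ending at a given dead-end position. -/
structure GameArena (P : Type u) where
  turn : P → Player
  edge : P → P → Prop
  win : P → Player → Prop

namespace GameArena

variable {P : Type u} (A : GameArena P)

def DeadEnd (u : P) : Prop := ∀ x, ¬ A.edge u x

/-- `w` is a finite nonempty walk whose first element is `v`. -/
def IsWalkFrom (v : P) (w : List P) : Prop :=
  w.head? = some v ∧ List.Chain' A.edge w

/-- A finite (maximal) play from `v`: a walk whose last element is a dead end. -/
def IsFinitePlay (v : P) (w : List P) : Prop :=
  A.IsWalkFrom v w ∧ ∀ u, w.getLast? = some u → A.DeadEnd u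

/-- An infinite play from `v`. -/
def IsInfPlay (v : P) (f : ℕ → P) : Prop :=
  f 0 = v ∧ ∀ n, A.edge (f n) (f (n + 1))

/-- A strategy (a function from histories to positions) of player `pl` is
legal if it always prescribes a move along an edge whenever a move exists. -/
def LegalFor (pl : Player) (v : P) (σ : List P → P) : Prop :=
  ∀ w u, A.IsWalkFrom v w → w.getLast? = some u → A.turn u = pl →
    (∃ x, A.edge u x) → A.edge u (σ w)

/-- The strategy `σ` of player `pl` is followed in the finite play `w`. -/
def FollowsFin (pl : Player) (σ : List P → P) (w : List P) : Prop :=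
  ∀ q u x, (q ++ [x]) <+: w → q.getLast? = some u → A.turn u = pl → x = σ q

/-- The strategy `σ` of player `pl` is followed in the infinite play `f`. -/
def FollowsInf (pl : Player) (σ : List P → P) (f : ℕ → P) : Prop :=
  ∀ n, A.turn (f n) = pl →
    f (n + 1) = σ (List.ofFn fun i : Fin (n + 1) => f i)

/-- `σ` is a winning strategy of player `pl` from `v`: it is legal, every
finite maximal play following it ends in a dead end won by `pl`, and no
infinite play follows it (infinite plays are won by neither player). -/
def WinningStrategy (pl : Player) (v : P) (σ : List P → P) : Prop :=
  A.LegalFor pl v σ ∧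
  (∀ w, A.IsFinitePlay v w → A.FollowsFin pl σ w →
      ∃ u, w.getLast? = some u ∧ A.win u pl) ∧
  (∀ f, A.IsInfPlay v f → ¬ A.FollowsInf pl σ f)

def HasWinningStrategy (pl : Player) (v : P) : Prop :=
  ∃ σ : List P → P, A.WinningStrategy pl v σ

end GameArena

/-- A positional strategy: its moves depend only on the current position. -/
def Positional {P : Type u} (σ : List P → P) : Prop :=
  ∀ q q' : List P, q.getLast? = q'.getLast? → σ q = σ q'

/-! ## Syntax of SCL / BndSCL -/

/-- A purely relational vocabulary. -/
structure Vocab : Type 1 where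
  Rel : Type
  arity : Rel → ℕ

/-- Formulas of SCL / BndSCL over the vocabulary `V`.  Variables and label
symbols are natural numbers; `claim L` is the claim symbol `C_L` and
`lab L φ` is the labelled formula `L φ`. -/
inductive SCLFormula (V : Vocab) : Type
  | bot : SCLFormula V
  | eq (x y : ℕ) : SCLFormula V
  | rel (R : V.Rel) (args : Fin (V.arity R) → ℕ) : SCLFormula V
  | claim (L : ℕ) : SCLFormula V
  | not (φ : SCLFormula V) : SCLFormula V
  | and (φ ψ : SCLFormula V) : SCLFormula V
  | or (φ ψ : SCLFormula V) : SCLFormula V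
  | ex (x : ℕ) (φ : SCLFormula V) : SCLFormula V
  | all (x : ℕ) (φ : SCLFormula V) : SCLFormula V
  | lab (L : ℕ) (φ : SCLFormula V) : SCLFormula V

namespace SCLFormula

variable {V : Vocab}

/-- First-order atoms. -/
def IsFOAtom : SCLFormula V → Prop
  | .bot => True
  | .eq _ _ => True
  | .rel _ _ => True
  | _ => False

/-- Purely first-order formulas (no claim symbols, no label symbols). -/
def IsFO : SCLFormula V → Prop
  | .bot => True
  | .eq _ _ => True
  | .rel _ _ => True
  | .claim _ => False
  | .not φ => IsFO φ
  | .and φ ψ => IsFO φ ∧ IsFO ψ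
  | .or φ ψ => IsFO φ ∧ IsFO ψ
  | .ex _ φ => IsFO φ
  | .all _ φ => IsFO φ
  | .lab _ _ => False

/-- Free (individual) variables. -/
def freeVars : SCLFormula V → Finset ℕ
  | .bot => ∅
  | .eq x y => {x, y}
  | .rel _ a => Finset.image a Finset.univ
  | .claim _ => ∅
  | .not φ => freeVars φ
  | .and φ ψ => freeVars φ ∪ freeVars ψ
  | .or φ ψ => freeVars φ ∪ freeVars ψ
  | .ex x φ => freeVars φ \ {x}
  | .all x φ => freeVars φ \ {x}
  | .lab _ φ => freeVars φ

/-- All variables occurring in a formula (free or bound). -/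
def vars : SCLFormula V → Finset ℕ
  | .bot => ∅
  | .eq x y => {x, y}
  | .rel _ a => Finset.image a Finset.univ
  | .claim _ => ∅
  | .not φ => vars φ
  | .and φ ψ => vars φ ∪ vars ψ
  | .or φ ψ => vars φ ∪ vars ψ
  | .ex x φ => insert x (vars φ)
  | .all x φ => insert x (vars φ)
  | .lab _ φ => vars φ

/-- Sentences: formulas with no free variables. -/
def IsSentence (φ : SCLFormula V) : Prop := freeVars φ = ∅

end SCLFormula

/-! ## Structures and first-order (Tarski) satisfaction -/

/-- A (suitable) model for vocabulary `V`: a nonempty domain together with an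
interpretation of all relation symbols. -/
structure Struct (V : Vocab) where
  Dom : Type u
  dom_nonempty : Nonempty Dom
  interp : ∀ R : V.Rel, (Fin (V.arity R) → Dom) → Prop

attribute [instance] Struct.dom_nonempty

/-- Satisfaction of atoms (false on non-atoms). -/
def atomSat {V : Vocab} (M : Struct.{u} V) (s : ℕ → M.Dom) : SCLFormula V → Prop
  | .bot => False
  | .eq x y => s x = s y
  | .rel R a => M.interp R fun i => s (a i)
  | _ => False

/-- Standard (Tarski) first-order satisfaction.  It is only meaningful on
purely first-order formulas; claim symbols are interpreted as `False` and
label symbols are ignored. -/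
def FOSat {V : Vocab} (M : Struct.{u} V) : (ℕ → M.Dom) → SCLFormula V → Prop
  | _, .bot => False
  | s, .eq x y => s x = s y
  | s, .rel R a => M.interp R fun i => s (a i)
  | _, .claim _ => False
  | s, .not φ => ¬ FOSat M s φ
  | s, .and φ ψ => FOSat M s φ ∧ FOSat M s ψ
  | s, .or φ ψ => FOSat M s φ ∨ FOSat M s ψ
  | s, .ex x φ => ∃ a : M.Dom, FOSat M (Function.update s x a) φ
  | s, .all x φ => ∀ a : M.Dom, FOSat M (Function.update s x a) φ
  | s, .lab _ φ => FOSat M s φ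

/-! ## The evaluation games -/

/-- A position of the semantic game: the current formula, the environment
recording for each label symbol `L` the reference formula `L ψ` it currently
names, the current assignment, and the polarity (`true` = `+`). -/
structure SCLPos (V : Vocab) (D : Type u) : Type u where
  form : SCLFormula V
  env : ℕ → Option (SCLFormula V)
  asg : ℕ → D
  pol : Bool

/-- Which player moves at a given position. (At positions with at most one
successor the owner is irrelevant; we let Eloise own them.) -/
def posTurn {V : Vocab} {D : Type u} (p : SCLPos V D) : Player :=
  match p.form, p.pol with
  | .and _ _, true => .abelard
  | .and _ _, false => .eloise
  | .or _ _, true => .eloise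
  | .or _ _, false => .abelard
  | .all _ _, true => .abelard
  | .all _ _, false => .eloise
  | .ex _ _, true => .eloise
  | .ex _ _, false => .abelard
  | _, _ => .eloise

/-- Who wins a play ending at a given position: at an FO-atom position,
Eloise wins iff the atom's truth value agrees with the polarity, and Abelard
wins otherwise; plays ending anywhere else (e.g. at a claim symbol with no
reference formula, or with clock value 0) are won by neither player. -/
def posWin {V : Vocab} (M : Struct.{u} V) (p : SCLPos V M.Dom) : Player → Prop
  | .eloise => p.form.IsFOAtom ∧ (atomSat M p.asg p.form ↔ p.pol = true)
  | .abelard => p.form.IsFOAtom ∧ ¬ (atomSat M p.asg p.form ↔ p.pol = true)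

/-- Moves of the unbounded evaluation game `G_∞`. -/
inductive UStep {V : Vocab} (M : Struct.{u} V) :
    SCLPos V M.Dom → SCLPos V M.Dom → Prop
  | neg (φ : SCLFormula V) (e : ℕ → Option (SCLFormula V)) (s : ℕ → M.Dom) (b : Bool) :
      UStep M ⟨.not φ, e, s, b⟩ ⟨φ, e, s, !b⟩
  | andLeft (φ ψ : SCLFormula V) (e : ℕ → Option (SCLFormula V)) (s : ℕ → M.Dom) (b : Bool) :
      UStep M ⟨.and φ ψ, e, s, b⟩ ⟨φ, e, s, b⟩
  | andRight (φ ψ : SCLFormula V) (e : ℕ → Option (SCLFormula V)) (s : ℕ → M.Dom) (b : Bool) :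
      UStep M ⟨.and φ ψ, e, s, b⟩ ⟨ψ, e, s, b⟩
  | orLeft (φ ψ : SCLFormula V) (e : ℕ → Option (SCLFormula V)) (s : ℕ → M.Dom) (b : Bool) :
      UStep M ⟨.or φ ψ, e, s, b⟩ ⟨φ, e, s, b⟩
  | orRight (φ ψ : SCLFormula V) (e : ℕ → Option (SCLFormula V)) (s : ℕ → M.Dom) (b : Bool) :
      UStep M ⟨.or φ ψ, e, s, b⟩ ⟨ψ, e, s, b⟩
  | exStep (x : ℕ) (φ : SCLFormula V) (e : ℕ → Option (SCLFormula V)) (s : ℕ → M.Dom)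
      (b : Bool) (a : M.Dom) :
      UStep M ⟨.ex x φ, e, s, b⟩ ⟨φ, e, Function.update s x a, b⟩
  | allStep (x : ℕ) (φ : SCLFormula V) (e : ℕ → Option (SCLFormula V)) (s : ℕ → M.Dom)
      (b : Bool) (a : M.Dom) :
      UStep M ⟨.all x φ, e, s, b⟩ ⟨φ, e, Function.update s x a, b⟩
  | labStep (L : ℕ) (φ : SCLFormula V) (e : ℕ → Option (SCLFormula V)) (s : ℕ → M.Dom)
      (b : Bool) :
      UStep M ⟨.lab L φ, e, s, b⟩ ⟨φ, Function.update e L (some (.lab L φ)), s, b⟩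
  | claimStep (L : ℕ) (e : ℕ → Option (SCLFormula V)) (s : ℕ → M.Dom) (b : Bool)
      (χ : SCLFormula V) (h : e L = some χ) :
      UStep M ⟨.claim L, e, s, b⟩ ⟨χ, e, s, b⟩

/-- Moves of the `n`-bounded evaluation game: positions additionally carry a
clock value, which decreases by one exactly at jumps from a claim symbol to
its reference formula; a claim-symbol position with clock value `0` is a dead
end won by neither player. -/
inductive BStep {V : Vocab} (M : Struct.{u} V) :
    SCLPos V M.Dom × ℕ → SCLPos V M.Dom × ℕ → Prop
  | neg (φ : SCLFormula V) (e : ℕ → Option (SCLFormula V)) (s : ℕ → M.Dom) (b : Bool) (n : ℕ) :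
      BStep M (⟨.not φ, e, s, b⟩, n) (⟨φ, e, s, !b⟩, n)
  | andLeft (φ ψ : SCLFormula V) (e : ℕ → Option (SCLFormula V)) (s : ℕ → M.Dom) (b : Bool)
      (n : ℕ) : BStep M (⟨.and φ ψ, e, s, b⟩, n) (⟨φ, e, s, b⟩, n)
  | andRight (φ ψ : SCLFormula V) (e : ℕ → Option (SCLFormula V)) (s : ℕ → M.Dom) (b : Bool)
      (n : ℕ) : BStep M (⟨.and φ ψ, e, s, b⟩, n) (⟨ψ, e, s, b⟩, n)
  | orLeft (φ ψ : SCLFormula V) (e : ℕ → Option (SCLFormula V)) (s : ℕ → M.Dom) (b : Bool)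
      (n : ℕ) : BStep M (⟨.or φ ψ, e, s, b⟩, n) (⟨φ, e, s, b⟩, n)
  | orRight (φ ψ : SCLFormula V) (e : ℕ → Option (SCLFormula V)) (s : ℕ → M.Dom) (b : Bool)
      (n : ℕ) : BStep M (⟨.or φ ψ, e, s, b⟩, n) (⟨ψ, e, s, b⟩, n)
  | exStep (x : ℕ) (φ : SCLFormula V) (e : ℕ → Option (SCLFormula V)) (s : ℕ → M.Dom)
      (b : Bool) (n : ℕ) (a : M.Dom) :
      BStep M (⟨.ex x φ, e, s, b⟩, n) (⟨φ, e, Function.update s x a, b⟩, n)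
  | allStep (x : ℕ) (φ : SCLFormula V) (e : ℕ → Option (SCLFormula V)) (s : ℕ → M.Dom)
      (b : Bool) (n : ℕ) (a : M.Dom) :
      BStep M (⟨.all x φ, e, s, b⟩, n) (⟨φ, e, Function.update s x a, b⟩, n)
  | labStep (L : ℕ) (φ : SCLFormula V) (e : ℕ → Option (SCLFormula V)) (s : ℕ → M.Dom)
      (b : Bool) (n : ℕ) :
      BStep M (⟨.lab L φ, e, s, b⟩, n) (⟨φ, Function.update e L (some (.lab L φ)), s, b⟩, n)
  | claimStep (L : ℕ) (e : ℕ → Option (SCLFormula V)) (s : ℕ → M.Dom) (b : Bool)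
      (χ : SCLFormula V) (n : ℕ) (h : e L = some χ) :
      BStep M (⟨.claim L, e, s, b⟩, n + 1) (⟨χ, e, s, b⟩, n)

/-- The unbounded evaluation game `G_∞(𝔄, ·, ·)` as a game arena. -/
def gameU {V : Vocab} (M : Struct.{u} V) : GameArena (SCLPos V M.Dom) where
  turn := posTurn
  edge := UStep M
  win := posWin M

/-- The bounded evaluation games `G_n(𝔄, ·, ·)` (for all clock values `n`
simultaneously) as a game arena. -/
def gameB {V : Vocab} (M : Struct.{u} V) : GameArena (SCLPos V M.Dom × ℕ) where
  turn p := posTurn p.1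
  edge := BStep M
  win p := posWin M p.1

/-- The initial position of the evaluation game for `φ` under assignment `s`:
empty environment and positive polarity. -/
def initPos {V : Vocab} {D : Type u} (φ : SCLFormula V) (s : ℕ → D) : SCLPos V D :=
  ⟨φ, fun _ => none, s, true⟩

/-- Truth under the unbounded semantics (the logic SCL):
`𝔄,s ⊨ φ` iff Eloise has a winning strategy in `G_∞(𝔄,s,φ)`. -/
def SCLTrue {V : Vocab} (M : Struct.{u} V) (s : ℕ → M.Dom) (φ : SCLFormula V) : Prop :=
  (gameU M).HasWinningStrategy .eloise (initPos φ s)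

/-! ### The bounded game `G_ω` -/

/-- Positions of the game `G_ω`: the initial position (where Abelard picks a
number `n'`), the intermediate positions (where Eloise picks some `n ≥ n'`),
and the positions of the `n`-bounded games. -/
inductive GOPos (V : Vocab) (D : Type u) : Type u
  | start : GOPos V D
  | mid (n' : ℕ) : GOPos V D
  | inner (p : SCLPos V D) (clock : ℕ) : GOPos V D

inductive GOStep {V : Vocab} (M : Struct.{u} V) (φ : SCLFormula V) (s : ℕ → M.Dom) :
    GOPos V M.Dom → GOPos V M.Dom → Prop
  | abelardPick (n' : ℕ) : GOStep M φ s .start (.mid n')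
  | eloisePick (n' n : ℕ) (h : n' ≤ n) : GOStep M φ s (.mid n') (.inner (initPos φ s) n)
  | play (p q : SCLPos V M.Dom) (m k : ℕ) (h : BStep M (p, m) (q, k)) :
      GOStep M φ s (.inner p m) (.inner q k)

def goTurn {V : Vocab} {D : Type u} : GOPos V D → Player
  | .start => .abelard
  | .mid _ => .eloise
  | .inner p _ => posTurn p

def goWin {V : Vocab} (M : Struct.{u} V) : GOPos V M.Dom → Player → Prop
  | .inner p _, pl => posWin M p pl
  | _, _ => False

/-- The bounded evaluation game `G_ω(𝔄,s,φ)`: Abelard picks `n' ∈ ℕ`, then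
Eloise picks `n ≥ n'`, and then `G_n(𝔄,s,φ)` is played. -/
def gameOmega {V : Vocab} (M : Struct.{u} V) (φ : SCLFormula V) (s : ℕ → M.Dom) :
    GameArena (GOPos V M.Dom) where
  turn := goTurn
  edge := GOStep M φ s
  win := goWin M

/-- Truth under the bounded semantics (the logic BndSCL):
`𝔄,s ⊨_ω φ` iff Eloise has a winning strategy in `G_ω(𝔄,s,φ)`. -/
def BndTrue {V : Vocab} (M : Struct.{u} V) (s : ℕ → M.Dom) (φ : SCLFormula V) : Prop :=
  (gameOmega M φ s).HasWinningStrategy .eloise .start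

/-! ## Approximants -/

/-- Auxiliary structural recursion for approximants: `k` tells what to put in
place of a claim symbol.  Label symbols are deleted (while updating the
environment), and polarity is tracked through negations. -/
def approxCore {V : Vocab}
    (k : (ℕ → Option (SCLFormula V)) → Bool → ℕ → SCLFormula V) :
    (ℕ → Option (SCLFormula V)) → Bool → SCLFormula V → SCLFormula V
  | _, _, .bot => .bot
  | _, _, .eq x y => .eq x y
  | _, _, .rel R a => .rel R a
  | e, b, .claim L => k e b L
  | e, b, .not φ => .not (approxCore k e (!b) φ)
  | e, b, .and φ ψ => .and (approxCore k e b φ) (approxCore k e b ψ)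
  | e, b, .or φ ψ => .or (approxCore k e b φ) (approxCore k e b ψ)
  | e, b, .ex x φ => .ex x (approxCore k e b φ)
  | e, b, .all x φ => .all x (approxCore k e b φ)
  | e, b, .lab L φ => approxCore k (Function.update e L (some (.lab L φ))) b φ

/-- `approx n e b φ` unfolds each claim symbol of `φ` (in environment `e`,
under polarity `b`) through `n` jumps to reference formulas; claim symbols
reached with exhausted budget (or with no reference formula) are replaced by
`⊥` at positive occurrences and `⊤` (i.e. `¬⊥`) at negative occurrences, and
all label symbols are deleted. -/
def approx {V : Vocab} : ℕ → (ℕ → Option (SCLFormula V)) → Bool → SCLFormula V → SCLFormula V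
  | 0 => approxCore fun _ b _ => if b then .bot else .not .bot
  | n + 1 => approxCore fun e b L =>
      match e L with
      | some χ => approx n e b χ
      | none => if b then .bot else .not .bot

/-- The `n`-th approximant `Φⁿ_φ` of `φ`: the first-order formula obtained
from the `n`-th unfolding of `φ` by deleting all label symbols and replacing
positive claim occurrences by `⊥` and negative ones by `⊤`. -/
def approximant {V : Vocab} (φ : SCLFormula V) (n : ℕ) : SCLFormula V :=
  approx n (fun _ => none) true φ

/-! ## Vocabulary extensions, expansions and reducts -/

/-- The vocabulary `τ'` obtained from `V` by adding new relation symbols from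
`N` (with arities `na`). -/
def extVocab (V : Vocab) (N : Type) (na : N → ℕ) : Vocab :=
  ⟨V.Rel ⊕ N, Sum.elim V.arity na⟩

/-- The expansion of a `V`-model `M` to an `extVocab V N na`-model, using `J`
to interpret the new relation symbols. -/
def expand {V : Vocab} {N : Type} {na : N → ℕ} (M : Struct.{u} V)
    (J : ∀ n : N, (Fin (na n) → M.Dom) → Prop) : Struct.{u} (extVocab V N na) where
  Dom := M.Dom
  dom_nonempty := M.dom_nonempty
  interp := fun R =>
    match R with
    | Sum.inl r => M.interp r
    | Sum.inr n => J n

/-- The reduct `𝔄'↾τ` of an `extVocab V N na`-model to the vocabulary `V`. -/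
def reduct {V : Vocab} {N : Type} {na : N → ℕ}
    (M' : Struct.{u} (extVocab V N na)) : Struct.{u} V where
  Dom := M'.Dom
  dom_nonempty := M'.dom_nonempty
  interp := fun R => M'.interp (Sum.inl R)

/-- `φ` uses only the variables `0, …, k−1` (free or bound), i.e. it belongs
to the `k`-variable fragment. -/
def UsesVarsLt {V : Vocab} (k : ℕ) (φ : SCLFormula V) : Prop :=
  ∀ x ∈ φ.vars, x < k

/-- The empty vocabulary. -/
def emptyVocab : Vocab := ⟨Empty, fun e => e.elim⟩

/-! ## Part 2: finiteness is ∀SO definable -/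

namespace Part2

abbrev V2 : Vocab := extVocab emptyVocab Unit (fun _ => 2)

def rl (x y : ℕ) : SCLFormula V2 := .rel (Sum.inr ()) ![x, y]

def Tot : SCLFormula V2 := .all 0 (.ex 1 (rl 0 1))
def Func : SCLFormula V2 :=
  .all 0 (.all 1 (.all 2 (.not (.and (rl 0 1) (.and (rl 0 2) (.not (.eq 1 2)))))))
def Inj : SCLFormula V2 :=
  .all 0 (.all 1 (.all 2 (.not (.and (rl 0 2) (.and (rl 1 2) (.not (.eq 0 1)))))))
def Surj : SCLFormula V2 := .all 1 (.ex 0 (rl 0 1))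

def Theta : SCLFormula V2 := .not (.and Tot (.and Func (.and Inj (.not Surj))))

lemma theta_isFO : Theta.IsFO := by
  simp [Theta, Tot, Func, Inj, Surj, rl, SCLFormula.IsFO]

lemma theta_freeVars : Theta.freeVars = ∅ := by
  simp [Theta, Tot, Func, Inj, Surj, rl, SCLFormula.freeVars]
  decide

section sem
variable (M : Struct.{u} emptyVocab) (J : ∀ _ : Unit, (Fin 2 → M.Dom) → Prop)

lemma rel_sat (s : ℕ → M.Dom) (x y : ℕ) :
    FOSat (expand M J) s (rl x y) ↔ J () ![s x, s y] := by
  have : (fun i => s (![x, y] i)) = ![s x, s y] := by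
    funext i; fin_cases i <;> rfl
  show (J () fun i => s (![x, y] i)) ↔ _
  rw [this]

lemma eval2 (f : Fin 2 → M.Dom) :
    (expand M J).interp (Sum.inr ()) f ↔ J () ![f 0, f 1] := by
  have h : ![f 0, f 1] = f := by funext i; fin_cases i <;> rfl
  rw [h]; exact Iff.rfl

lemma theta_sat (s : ℕ → M.Dom) :
    FOSat (expand M J) s Theta ↔
      ¬ ((∀ a, ∃ b, J () ![a, b]) ∧
         (∀ a b c, J () ![a, b] → J () ![a, c] → b = c) ∧
         (∀ a b c, J () ![a, c] → J () ![b, c] → a = b) ∧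
         ¬ (∀ b, ∃ a, J () ![a, b])) := by
  have hr : ∀ (t : ℕ → (expand M J).Dom) x y, FOSat (expand M J) t (rl x y) ↔ J () ![t x, t y] :=
    fun t x y => rel_sat M J t x y
  simp only [Theta, Tot, Func, Inj, Surj, FOSat, hr, eval2,
    Matrix.cons_val_zero, Matrix.cons_val_one, Matrix.head_cons, Function.update_apply]
  norm_num
  exact Iff.rfl

end sem

/-- On an infinite type there is an injective non-surjective self-map. -/
lemma exists_inj_not_surj (D : Type u) [Infinite D] :
    ∃ g : D → D, Function.Injective g ∧ ¬ Function.Surjective g := by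
  classical
  obtain ⟨e⟩ : Nonempty (ℕ ↪ D) := ⟨Infinite.natEmbedding D⟩
  refine ⟨fun x => if h : ∃ n, e n = x then e (h.choose + 1) else x, ?_, ?_⟩
  · intro x y hxy
    by_cases hx : ∃ n, e n = x <;> by_cases hy : ∃ n, e n = y <;>
      simp only [hx, hy, dif_pos, dif_neg, not_false_iff] at hxy
    · have := e.injective hxy
      rw [← hx.choose_spec, ← hy.choose_spec, (by omega : hx.choose = hy.choose)]
    · exact absurd ⟨_, hxy⟩ hy
    · exact absurd ⟨_, hxy.symm⟩ hx
    · exact hxy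
  · intro hsurj
    obtain ⟨x, hx⟩ := hsurj (e 0)
    by_cases h : ∃ n, e n = x <;> simp only [h, dif_pos, dif_neg, not_false_iff] at hx
    · exact Nat.succ_ne_zero _ (e.injective hx)
    · exact h ⟨0, hx.symm⟩

lemma part2_main (M : Struct.{u} emptyVocab) :
    Finite M.Dom ↔
      ∀ J : ∀ _ : Unit, (Fin 2 → M.Dom) → Prop,
        ∀ s : ℕ → M.Dom, FOSat (expand M J) s Theta := by
  classical
  constructor
  · intro hfin J s
    rw [theta_sat]
    rintro ⟨htot, hfunc, hinj, hnsurj⟩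
    apply hnsurj
    -- extract the function
    choose f hf using htot
    have hfi : Function.Injective f := fun a b hab => hinj a b (f a) (hf a) (hab ▸ hf b)
    have hfs : Function.Surjective f := Finite.surjective_of_injective hfi
    intro b
    obtain ⟨a, rfl⟩ := hfs b
    exact ⟨a, hf a⟩
  · intro h
    by_contra hfin
    have : Infinite M.Dom := not_finite_iff_infinite.mp hfin
    obtain ⟨g, hgi, hgs⟩ := exists_inj_not_surj M.Dom
    have := (theta_sat M (fun _ v => g (v 0) = v 1) (fun _ => Classical.arbitrary M.Dom)).mp
      (h _ _)
    apply this
    refine ⟨fun a => ⟨g a, by simp⟩, ?_, ?_, ?_⟩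
    · intro a b c h1 h2
      simp only [Matrix.cons_val_zero, Matrix.cons_val_one, Matrix.head_cons] at h1 h2
      exact h1.symm.trans h2
    · intro a b c h1 h2
      simp only [Matrix.cons_val_zero, Matrix.cons_val_one, Matrix.head_cons] at h1 h2
      exact hgi (h1.trans h2.symm)
    · intro hs
      apply hgs
      intro b
      obtain ⟨a, ha⟩ := hs b
      simp only [Matrix.cons_val_zero, Matrix.cons_val_one, Matrix.head_cons] at ha
      exact ⟨a, ha⟩

end Part2


/-! ## A generic simulation lemma for transferring winning strategies -/

namespace Sim

open Classical in
/-- The next element appended to the lifted walk. -/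
noncomputable def nxt {P : Type u} {Q : Type u} (A : GameArena P) (R : P → Q → Prop)
    (σ : List P → P) (lft : List P) (p : P) (q : Q) : P :=
  if A.turn p = .eloise then σ lft
  else @Classical.epsilon P ⟨p⟩ fun p' => A.edge p p' ∧ R p' q

/-- The lift of a reversed walk. -/
noncomputable def liftRev {P : Type u} {Q : Type u} (A : GameArena P) (R : P → Q → Prop)
    (v₀ : P) (σ : List P → P) : List Q → List P
  | [] => []
  | q :: rest =>
    match liftRev A R v₀ σ rest with
    | [] => [v₀]
    | p :: ps => nxt A R σ (p :: ps).reverse p q :: p :: ps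

/-- The σ-guided lift of a walk of `B` to a walk of `A`. -/
noncomputable def lift {P : Type u} {Q : Type u} (A : GameArena P) (R : P → Q → Prop)
    (v₀ : P) (σ : List P → P) (w : List Q) : List P :=
  (liftRev A R v₀ σ w.reverse).reverse

section
variable {P : Type u} {Q : Type u} (A : GameArena P) (B : GameArena Q) (R : P → Q → Prop)
  (v₀ : P) (q₀ : Q) (σ : List P → P)

@[simp] lemma lift_nil : lift A R v₀ σ [] = [] := rfl

@[simp] lemma lift_singleton (q : Q) : lift A R v₀ σ [q] = [v₀] := rfl

lemma lift_append (w : List Q) (q : Q) (p : P)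
    (hp : (lift A R v₀ σ w).getLast? = some p) :
    lift A R v₀ σ (w ++ [q]) =
      lift A R v₀ σ w ++ [nxt A R σ (lift A R v₀ σ w) p q] := by
  unfold lift at *
  rw [List.getLast?_reverse] at hp
  obtain ⟨ps, hps⟩ : ∃ ps, liftRev A R v₀ σ w.reverse = p :: ps := by
    cases h : liftRev A R v₀ σ w.reverse with
    | nil => rw [h] at hp; simp at hp
    | cons a ps => rw [h] at hp; simp at hp; exact ⟨ps, by rw [hp]⟩
  have : (w ++ [q]).reverse = q :: w.reverse := by simp
  rw [this]
  show (liftRev A R v₀ σ (q :: w.reverse)).reverse = _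
  rw [liftRev, hps]
  simp

open Classical in
/-- The strategy for Eloise in `B` obtained by shadowing `σ`. -/
noncomputable def tau (w : List Q) : Q :=
  if h : ∃ q', B.edge ((w.getLast?).getD q₀) q' ∧ R (σ (lift A R v₀ σ w)) q' then h.choose
  else if h2 : ∃ q', B.edge ((w.getLast?).getD q₀) q' then h2.choose
  else q₀

/-- The invariant maintained along walks of `B` that follow `tau`. -/
def Good (w : List Q) : Prop :=
  A.IsWalkFrom v₀ (lift A R v₀ σ w) ∧
  A.FollowsFin .eloise σ (lift A R v₀ σ w) ∧
  (∀ p q, (lift A R v₀ σ w).getLast? = some p → w.getLast? = some q → R p q)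

end

end Sim

namespace Sim

section main
variable {P : Type u} {Q : Type u} {A : GameArena P} {B : GameArena Q} {R : P → Q → Prop}
  {v₀ : P} {q₀ : Q} {σ : List P → P}

/-- Appending a legal move to a walk. -/
lemma isWalkFrom_snoc {v : P} {l : List P} {x p : P} (h : A.IsWalkFrom v l)
    (hp : l.getLast? = some p) (he : A.edge p x) : A.IsWalkFrom v (l ++ [x]) := by
  have hne : l ≠ [] := by rintro rfl; simp at hp
  refine ⟨by rw [List.head?_append_of_ne_nil _ hne]; exact h.1, ?_⟩
  rw [List.Chain', List.isChain_append]
  refine ⟨h.2, List.isChain_singleton x, ?_⟩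
  intro a ha b hb
  simp at hb
  rw [hp] at ha; simp at ha
  rw [← ha, ← hb]; exact he

lemma followsFin_snoc {pl : Player} {τ : List P → P} {l : List P} {x : P}
    (h : A.FollowsFin pl τ l)
    (hx : ∀ p, l.getLast? = some p → A.turn p = pl → x = τ l) :
    A.FollowsFin pl τ (l ++ [x]) := by
  intro m u y hpre h1 h2
  rcases List.prefix_concat_iff.mp hpre with heq | hpre'
  · obtain ⟨rfl, heq2⟩ := List.append_inj' heq rfl
    have : y = x := by simpa using heq2
    subst this
    exact hx u h1 h2
  · exact h m u y hpre' h1 h2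

variable (hturn : ∀ p q, R p q → A.turn p = B.turn q)
  (hwin : ∀ p q pl, R p q → (A.win p pl ↔ B.win q pl))
  (hdead : ∀ p q, R p q → (A.DeadEnd p ↔ B.DeadEnd q))
  (hforth : ∀ p q p', R p q → A.edge p p' → ∃ q', B.edge q q' ∧ R p' q')
  (hback : ∀ p q q', R p q → B.edge q q' → ∃ p', A.edge p p' ∧ R p' q')
  (h0 : R v₀ q₀) (hσ : A.WinningStrategy .eloise v₀ σ)

include hturn hwin hdead hforth hback h0 hσ in
lemma good_of_follows :
    ∀ w, B.IsWalkFrom q₀ w → B.FollowsFin .eloise (tau A B R v₀ q₀ σ) w →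
      Good A R v₀ σ w := by
  intro w
  induction w using List.reverseRecOn with
  | nil =>
    intro hw _
    exact absurd hw.1 (by simp)
  | append_singleton w' q IH =>
    intro hw hf
    rcases eq_or_ne w' [] with rfl | hw'
    · have hq : q = q₀ := by simpa using hw.1
      subst hq
      rw [List.nil_append]
      refine ⟨⟨by simp, List.isChain_singleton _⟩, ?_, ?_⟩
      · intro l u x hpre h1 _
        have hlen := hpre.length_le
        rw [lift_singleton] at hpre hlen
        simp only [List.length_append, List.length_singleton] at hlen
        have : l = [] := List.eq_nil_of_length_eq_zero (by omega)
        subst this; simp at h1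
      · intro p q hp hq
        simp at hp hq
        rw [← hp, ← hq]; exact h0
    · -- inductive step
      have hhead : w'.head? = some q₀ := by
        have h1 := hw.1
        rw [List.head?_append_of_ne_nil _ hw'] at h1
        exact h1
      obtain ⟨cw', _, hlink⟩ := List.isChain_append.mp hw.2
      have hwalk' : B.IsWalkFrom q₀ w' := ⟨hhead, cw'⟩
      have hf' : B.FollowsFin .eloise (tau A B R v₀ q₀ σ) w' := by
        intro l u x hpre h1 h2
        exact hf l u x (hpre.trans ⟨[q], rfl⟩) h1 h2
      have hGood := IH hwalk' hf'
      obtain ⟨u, hu⟩ : ∃ u, w'.getLast? = some u := by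
        rw [← Option.isSome_iff_exists]; simpa using hw'
      have hliftne : lift A R v₀ σ w' ≠ [] := by
        intro hnil
        have := hGood.1.1
        rw [hnil] at this; simp at this
      obtain ⟨p, hp⟩ : ∃ p, (lift A R v₀ σ w').getLast? = some p := by
        rw [← Option.isSome_iff_exists]; simpa using hliftne
      have hRpu : R p u := hGood.2.2 p u hp hu
      have hedge : B.edge u q := by
        refine hlink u ?_ q (by simp)
        rw [hu]; simp
      have hAB := hturn p u hRpu
      have hlift := lift_append A R v₀ σ w' q p hp
      have hlastrel : ∀ x : P,
          (∀ p' q', (lift A R v₀ σ w' ++ [x]).getLast? = some p' →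
            (w' ++ [q]).getLast? = some q' → R p' q') ↔ R x q := by
        intro x
        constructor
        · intro h; exact h x q List.getLast?_concat List.getLast?_concat
        · intro h p' q' h1 h2
          rw [List.getLast?_concat] at h1 h2
          injection h1 with h1; injection h2 with h2
          rw [← h1, ← h2]; exact h
      by_cases ht : A.turn p = .eloise
      · -- Eloise's move: it was prescribed by `tau`
        have hBturn : B.turn u = .eloise := by rw [← hAB]; exact ht
        have hqtau : q = tau A B R v₀ q₀ σ w' :=
          hf w' u q (List.prefix_refl _) hu hBturn
        have hndA : ∃ x, A.edge p x := by
          by_contra hnx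
          push_neg at hnx
          exact ((hdead p u hRpu).mp hnx) q hedge
        have hlegal : A.edge p (σ (lift A R v₀ σ w')) :=
          hσ.1 (lift A R v₀ σ w') p hGood.1 hp ht hndA
        have hex : ∃ q', B.edge u q' ∧ R (σ (lift A R v₀ σ w')) q' :=
          hforth p u _ hRpu hlegal
        have hgd : w'.getLast?.getD q₀ = u := by rw [hu]; rfl
        have hex' : ∃ q', B.edge (w'.getLast?.getD q₀) q' ∧
            R (σ (lift A R v₀ σ w')) q' := by rw [hgd]; exact hex
        have htc : tau A B R v₀ q₀ σ w' = hex'.choose := by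
          unfold tau; rw [dif_pos hex']
        have hspec : B.edge u (tau A B R v₀ q₀ σ w') ∧
            R (σ (lift A R v₀ σ w')) (tau A B R v₀ q₀ σ w') := by
          constructor
          · rw [htc, ← hgd]; exact hex'.choose_spec.1
          · rw [htc]; exact hex'.choose_spec.2
        have hRq : R (σ (lift A R v₀ σ w')) q := by rw [hqtau]; exact hspec.2
        have hnxt : nxt A R σ (lift A R v₀ σ w') p q = σ (lift A R v₀ σ w') :=
          if_pos ht
        rw [hnxt] at hlift
        unfold Good
        rw [hlift]
        refine ⟨isWalkFrom_snoc hGood.1 hp hlegal, ?_, (hlastrel _).mpr hRq⟩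
        refine followsFin_snoc hGood.2.1 ?_
        intro p' hp' _
        rfl
      · -- Abelard's move: lift it back
        have ht' : A.turn p = .abelard := by
          cases h : A.turn p
          · exact absurd h ht
          · rfl
        have hex : ∃ p', A.edge p p' ∧ R p' q := hback p u q hRpu hedge
        have hnxt : nxt A R σ (lift A R v₀ σ w') p q =
            @Classical.epsilon P ⟨p⟩ (fun p' => A.edge p p' ∧ R p' q) := if_neg ht
        have hspec : A.edge p (nxt A R σ (lift A R v₀ σ w') p q) ∧
            R (nxt A R σ (lift A R v₀ σ w') p q) q := by
          rw [hnxt]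
          exact @Classical.epsilon_spec P (fun p' => A.edge p p' ∧ R p' q) hex
        unfold Good
        rw [hlift]
        refine ⟨isWalkFrom_snoc hGood.1 hp hspec.1, ?_, (hlastrel _).mpr hspec.2⟩
        refine followsFin_snoc hGood.2.1 ?_
        intro p' hp' hturn'
        rw [hp] at hp'; injection hp' with hp'
        rw [← hp'] at hturn'
        exact absurd hturn' (by rw [ht']; simp)

include hturn hwin hdead hforth hback h0 hσ in
theorem transfer : B.HasWinningStrategy .eloise q₀ := by
  classical
  refine ⟨tau A B R v₀ q₀ σ, ?_, ?_, ?_⟩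
  · -- legality
    intro w u hwalk hlast hturnu hex
    unfold tau
    have hgd : w.getLast?.getD q₀ = u := by rw [hlast]; rfl
    split_ifs with h1 h2
    · rw [← hgd]; exact h1.choose_spec.1
    · rw [← hgd]; exact h2.choose_spec
    · rw [← hgd] at hex; exact absurd hex h2
  · -- finite plays
    intro w hplay hfollow
    have hGood := good_of_follows hturn hwin hdead hforth hback h0 hσ w hplay.1 hfollow
    have hwne : w ≠ [] := by
      intro h; rw [h] at hplay; exact absurd hplay.1.1 (by simp)
    obtain ⟨u, hu⟩ : ∃ u, w.getLast? = some u := by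
      rw [← Option.isSome_iff_exists]; simpa using hwne
    have hliftne : lift A R v₀ σ w ≠ [] := by
      intro hnil
      have := hGood.1.1
      rw [hnil] at this; simp at this
    obtain ⟨p, hp⟩ : ∃ p, (lift A R v₀ σ w).getLast? = some p := by
      rw [← Option.isSome_iff_exists]; simpa using hliftne
    have hRpu : R p u := hGood.2.2 p u hp hu
    have hdeadu : B.DeadEnd u := hplay.2 u hu
    have hdeadp : A.DeadEnd p := (hdead p u hRpu).mpr hdeadu
    have hliftplay : A.IsFinitePlay v₀ (lift A R v₀ σ w) := by
      refine ⟨hGood.1, ?_⟩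
      intro p' hp'
      rw [hp] at hp'; injection hp' with hp'; rw [← hp']; exact hdeadp
    obtain ⟨p', hp', hwinp⟩ := hσ.2.1 (lift A R v₀ σ w) hliftplay hGood.2.1
    rw [hp] at hp'; injection hp' with hp'
    refine ⟨u, hu, ?_⟩
    rw [← hp'] at hwinp
    exact (hwin p u .eloise hRpu).mp hwinp
  · -- no infinite plays
    intro f hinf hfol
    set w : ℕ → List Q := fun n => List.ofFn fun i : Fin (n + 1) => f i with hwdef
    have hw0 : w 0 = [f 0] := by simp [hwdef]
    have hwsucc : ∀ n, w (n + 1) = w n ++ [f (n + 1)] := by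
      intro n
      rw [hwdef]
      simp only
      rw [List.ofFn_succ']
      simp [List.concat_eq_append]
    have hlastw : ∀ n, (w n).getLast? = some (f n) := by
      intro n
      induction n with
      | zero => rw [hw0]; rfl
      | succ k _ => rw [hwsucc, List.getLast?_concat]
    have hwalk : ∀ n, B.IsWalkFrom q₀ (w n) := by
      intro n
      induction n with
      | zero => rw [hw0]; exact ⟨by simpa using hinf.1, List.isChain_singleton _⟩
      | succ k ih =>
        rw [hwsucc]
        exact isWalkFrom_snoc ih (hlastw k) (hinf.2 k)
    have hfoll : ∀ n, B.FollowsFin .eloise (tau A B R v₀ q₀ σ) (w n) := by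
      intro n l u x hpre h1 h2
      have hlne : l ≠ [] := by intro h; rw [h] at h1; simp at h1
      obtain ⟨k, hk⟩ : ∃ k, l.length = k + 1 :=
        ⟨l.length - 1, by
          cases l
          · exact absurd rfl hlne
          · simp only [List.length_cons]; omega⟩
      have hlen : l.length + 1 ≤ n + 1 := by simpa [hwdef] using hpre.length_le
      have hlpre : l <+: w n := (List.prefix_append l [x]).trans hpre
      have hlw : l = w k := by
        apply List.ext_getElem
        · simp [hwdef, hk]
        · intro i hi1 hi2
          have hiw : i < (w n).length := by
            simp only [hwdef, List.length_ofFn]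
            have := hi1; omega
          rw [hlpre.getElem hi1]
          simp only [hwdef]
          rw [List.getElem_ofFn, List.getElem_ofFn]
      have hx : x = f (k + 1) := by
        have hilt : l.length < (l ++ [x]).length := by simp
        have h2' := hpre.getElem hilt
        rw [List.getElem_concat_length rfl] at h2'
        simp only [hwdef] at h2' ⊢
        rw [List.getElem_ofFn] at h2'
        simpa [hk] using h2'
      have hu : u = f k := by
        rw [hlw, hlastw k] at h1
        injection h1 with h1; exact h1.symm
      have hturnk : B.turn (f k) = .eloise := by rw [← hu]; exact h2
      rw [hx, hlw]
      have := hfol k hturnk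
      rw [this]
    have hgood : ∀ n, Good A R v₀ σ (w n) := fun n =>
      good_of_follows hturn hwin hdead hforth hback h0 hσ (w n) (hwalk n) (hfoll n)
    have hliftne : ∀ n, lift A R v₀ σ (w n) ≠ [] := by
      intro n h
      have := (hgood n).1.1
      rw [h] at this; simp at this
    have hne : ∀ n, ∃ p, (lift A R v₀ σ (w n)).getLast? = some p := fun n => by
      rw [← Option.isSome_iff_exists]; simpa using hliftne n
    set g : ℕ → P := fun n => ((lift A R v₀ σ (w n)).getLast?).getD v₀ with hgdef
    have hgl : ∀ n, (lift A R v₀ σ (w n)).getLast? = some (g n) := by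
      intro n
      obtain ⟨p, hp⟩ := hne n
      rw [hgdef]; simp only; rw [hp]; rfl
    have hliftsucc : ∀ n, lift A R v₀ σ (w (n + 1)) =
        lift A R v₀ σ (w n) ++ [nxt A R σ (lift A R v₀ σ (w n)) (g n) (f (n + 1))] := by
      intro n
      rw [hwsucc n]
      exact lift_append A R v₀ σ (w n) (f (n + 1)) (g n) (hgl n)
    have hgnxt : ∀ n, g (n + 1) = nxt A R σ (lift A R v₀ σ (w n)) (g n) (f (n + 1)) := by
      intro n
      have h := hgl (n + 1)
      rw [hliftsucc n, List.getLast?_concat] at h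
      injection h with h; exact h.symm
    have hg0 : g 0 = v₀ := by
      rw [hgdef]; simp only; rw [hw0, lift_singleton]; rfl
    have hedges : ∀ n, A.edge (g n) (g (n + 1)) := by
      intro n
      have hc := (hgood (n + 1)).1.2
      rw [hliftsucc n] at hc
      obtain ⟨_, _, hlink2⟩ := List.isChain_append.mp hc
      have h := hlink2 (g n) (by rw [hgl n]; simp)
        (nxt A R σ (lift A R v₀ σ (w n)) (g n) (f (n + 1))) (by simp)
      rw [← hgnxt n] at h
      exact h
    have hofn : ∀ n, lift A R v₀ σ (w n) = List.ofFn fun i : Fin (n + 1) => g i := by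
      intro n
      induction n with
      | zero => rw [hw0, lift_singleton]; simp [hg0]
      | succ k ih =>
        rw [hliftsucc k, ← hgnxt k, ih,
          List.ofFn_succ' (f := fun i : Fin (k + 1 + 1) => g ↑i)]
        simp [List.concat_eq_append]
    have hinfA : A.IsInfPlay v₀ g := ⟨hg0, hedges⟩
    have hfolA : A.FollowsInf .eloise σ g := by
      intro n hturnn
      rw [hgnxt n]
      unfold nxt
      rw [if_pos hturnn, hofn n]
    exact hσ.2.2 g hinfA hfolA

end main

end Sim

/-! ## The simulation relation between evaluation games over the empty vocabulary -/

namespace Part1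

open SCLFormula

/-- Positions related: same formula, environment and polarity; all relevant
variables lie in `W`; the assignments have the same equality pattern on `W`. -/
def PRel (W : Finset ℕ) {D₁ D₂ : Type u}
    (p : SCLPos emptyVocab D₁) (q : SCLPos emptyVocab D₂) : Prop :=
  p.form = q.form ∧ p.env = q.env ∧ p.pol = q.pol ∧
  p.form.vars ⊆ W ∧ (∀ L χ, p.env L = some χ → χ.vars ⊆ W) ∧
  (∀ x ∈ W, ∀ y ∈ W, (p.asg x = p.asg y ↔ q.asg x = q.asg y))

lemma PRel.swap {W : Finset ℕ} {D₁ D₂ : Type u}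
    {p : SCLPos emptyVocab D₁} {q : SCLPos emptyVocab D₂}
    (h : PRel W p q) : PRel W q p := by
  obtain ⟨h1, h2, h3, h4, h5, h6⟩ := h
  exact ⟨h1.symm, h2.symm, h3.symm, h1 ▸ h4, h2 ▸ h5,
    fun x hx y hy => (h6 x hx y hy).symm⟩

lemma pattern_extend {D₁ D₂ : Type u} (W : Finset ℕ) (s : ℕ → D₁) (t : ℕ → D₂)
    (hpat : ∀ x ∈ W, ∀ y ∈ W, (s x = s y ↔ t x = t y))
    {x : ℕ} (hx : x ∈ W) (a : D₁)
    (hfresh : ∀ G : Finset D₂, G.card < W.card → ∃ b, b ∉ G) :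
    ∃ b : D₂, ∀ y ∈ W, ∀ z ∈ W,
      (Function.update s x a y = Function.update s x a z ↔
       Function.update t x b y = Function.update t x b z) := by
  classical
  by_cases hcase : ∃ y ∈ W, y ≠ x ∧ s y = a
  · obtain ⟨y₀, hy₀W, hy₀x, hy₀⟩ := hcase
    refine ⟨t y₀, ?_⟩
    intro y hy z hz
    simp only [Function.update_apply]
    by_cases hyx : y = x <;> by_cases hzx : z = x <;>
      simp only [hyx, hzx, if_true, if_false, reduceIte]
    · rw [← hy₀]
      exact hpat y₀ hy₀W z hz
    · rw [← hy₀]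
      exact hpat y hy y₀ hy₀W
    · exact hpat y hy z hz
  · push_neg at hcase
    obtain ⟨b, hb⟩ := hfresh ((W.erase x).image t)
      (lt_of_le_of_lt Finset.card_image_le (Finset.card_erase_lt_of_mem hx))
    have hbne : ∀ y ∈ W, y ≠ x → t y ≠ b := by
      intro y hy hyx h
      exact hb (Finset.mem_image.mpr ⟨y, Finset.mem_erase.mpr ⟨hyx, hy⟩, h⟩)
    refine ⟨b, ?_⟩
    intro y hy z hz
    simp only [Function.update_apply]
    by_cases hyx : y = x <;> by_cases hzx : z = x <;>
      simp only [hyx, hzx, if_true, if_false, reduceIte]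
    · exact ⟨fun h => absurd h.symm (hcase z hz hzx),
        fun h => absurd h.symm (hbne z hz hzx)⟩
    · exact ⟨fun h => absurd h (hcase y hy hyx),
        fun h => absurd h (hbne y hy hyx)⟩
    · exact hpat y hy z hz

variable {M₁ M₂ : Struct.{u} emptyVocab} {W : Finset ℕ}

lemma rel_turn {p : SCLPos emptyVocab M₁.Dom} {q : SCLPos emptyVocab M₂.Dom}
    (hR : PRel W p q) : posTurn p = posTurn q := by
  obtain ⟨f, e, s, b⟩ := p
  obtain ⟨f', e', t, b'⟩ := q
  obtain ⟨hf, he, hb, -, -, -⟩ := hR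
  cases hf; cases hb
  rfl

lemma rel_win {p : SCLPos emptyVocab M₁.Dom} {q : SCLPos emptyVocab M₂.Dom}
    (hR : PRel W p q) (pl : Player) : posWin M₁ p pl ↔ posWin M₂ q pl := by
  obtain ⟨f, e, s, b⟩ := p
  obtain ⟨f', e', t, b'⟩ := q
  obtain ⟨hf, he, hb, hv, -, hpat⟩ := hR
  cases hf; cases hb; cases he
  have hAtom : f.IsFOAtom → (atomSat M₁ s f ↔ atomSat M₂ t f) := by
    intro hat
    cases f with
    | bot => exact Iff.rfl
    | eq x y =>
      have hxW : x ∈ W := hv (by simp [vars])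
      have hyW : y ∈ W := hv (by simp [vars])
      exact hpat x hxW y hyW
    | rel R a => exact R.elim
    | _ => exact absurd hat (by simp [IsFOAtom])
  cases pl with
  | eloise =>
    constructor
    · rintro ⟨hat, hiff⟩; exact ⟨hat, (hAtom hat).symm.trans hiff⟩
    · rintro ⟨hat, hiff⟩; exact ⟨hat, (hAtom hat).trans hiff⟩
  | abelard =>
    constructor
    · rintro ⟨hat, hiff⟩; exact ⟨hat, fun h => hiff ((hAtom hat).trans h)⟩
    · rintro ⟨hat, hiff⟩; exact ⟨hat, fun h => hiff ((hAtom hat).symm.trans h)⟩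

lemma rel_dead {p : SCLPos emptyVocab M₁.Dom} {q : SCLPos emptyVocab M₂.Dom}
    (hR : PRel W p q) : (gameU M₁).DeadEnd p ↔ (gameU M₂).DeadEnd q := by
  obtain ⟨f, e, s, b⟩ := p
  obtain ⟨f', e', t, b'⟩ := q
  obtain ⟨hf, he, hb, -, -, -⟩ := hR
  cases hf; cases hb; cases he
  cases f with
  | bot => exact iff_of_true (fun x hx => by cases hx) (fun x hx => by cases hx)
  | eq x y => exact iff_of_true (fun x hx => by cases hx) (fun x hx => by cases hx)
  | rel R a => exact R.elim
  | claim L =>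
    cases hL : e L with
    | none =>
      refine iff_of_true (fun x hx => ?_) (fun x hx => ?_) <;>
      · cases hx with
        | claimStep L e s b χ h => rw [hL] at h; cases h
    | some χ =>
      exact iff_of_false (fun hd => hd _ (.claimStep L e s b χ hL))
        (fun hd => hd _ (.claimStep L e t b χ hL))
  | not φ =>
    exact iff_of_false (fun hd => hd _ (.neg φ e s b)) (fun hd => hd _ (.neg φ e t b))
  | and φ ψ =>
    exact iff_of_false (fun hd => hd _ (.andLeft φ ψ e s b))
      (fun hd => hd _ (.andLeft φ ψ e t b))
  | or φ ψ =>
    exact iff_of_false (fun hd => hd _ (.orLeft φ ψ e s b))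
      (fun hd => hd _ (.orLeft φ ψ e t b))
  | ex x φ =>
    exact iff_of_false
      (fun hd => hd _ (.exStep x φ e s b (Classical.arbitrary M₁.Dom)))
      (fun hd => hd _ (.exStep x φ e t b (Classical.arbitrary M₂.Dom)))
  | all x φ =>
    exact iff_of_false
      (fun hd => hd _ (.allStep x φ e s b (Classical.arbitrary M₁.Dom)))
      (fun hd => hd _ (.allStep x φ e t b (Classical.arbitrary M₂.Dom)))
  | lab L φ =>
    exact iff_of_false (fun hd => hd _ (.labStep L φ e s b))
      (fun hd => hd _ (.labStep L φ e t b))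

lemma rel_step (hfresh : ∀ G : Finset M₂.Dom, G.card < W.card → ∃ b, b ∉ G)
    {p : SCLPos emptyVocab M₁.Dom} {q : SCLPos emptyVocab M₂.Dom}
    (hR : PRel W p q) :
    ∀ p', UStep M₁ p p' → ∃ q', UStep M₂ q q' ∧ PRel W p' q' := by
  obtain ⟨f, e, s, b⟩ := p
  obtain ⟨f', e', t, b'⟩ := q
  obtain ⟨hf, he, hb, hv, hev, hpat⟩ := hR
  cases hf; cases hb; cases he
  intro p' hstep
  cases hstep with
  | neg φ e s b =>
    exact ⟨⟨φ, e, t, !b⟩, .neg φ e t b, rfl, rfl, rfl, hv, hev, hpat⟩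
  | andLeft φ ψ e s b =>
    exact ⟨⟨φ, e, t, b⟩, .andLeft φ ψ e t b, rfl, rfl, rfl,
      fun y hy => hv (Finset.mem_union_left _ hy), hev, hpat⟩
  | andRight φ ψ e s b =>
    exact ⟨⟨ψ, e, t, b⟩, .andRight φ ψ e t b, rfl, rfl, rfl,
      fun y hy => hv (Finset.mem_union_right _ hy), hev, hpat⟩
  | orLeft φ ψ e s b =>
    exact ⟨⟨φ, e, t, b⟩, .orLeft φ ψ e t b, rfl, rfl, rfl,
      fun y hy => hv (Finset.mem_union_left _ hy), hev, hpat⟩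
  | orRight φ ψ e s b =>
    exact ⟨⟨ψ, e, t, b⟩, .orRight φ ψ e t b, rfl, rfl, rfl,
      fun y hy => hv (Finset.mem_union_right _ hy), hev, hpat⟩
  | exStep x φ e s b a =>
    obtain ⟨c, hc⟩ := pattern_extend W s t hpat (hv (Finset.mem_insert_self x _)) a hfresh
    exact ⟨⟨φ, e, Function.update t x c, b⟩, .exStep x φ e t b c, rfl, rfl, rfl,
      fun y hy => hv (Finset.mem_insert_of_mem hy), hev, hc⟩
  | allStep x φ e s b a =>
    obtain ⟨c, hc⟩ := pattern_extend W s t hpat (hv (Finset.mem_insert_self x _)) a hfresh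
    exact ⟨⟨φ, e, Function.update t x c, b⟩, .allStep x φ e t b c, rfl, rfl, rfl,
      fun y hy => hv (Finset.mem_insert_of_mem hy), hev, hc⟩
  | labStep L φ e s b =>
    refine ⟨⟨φ, Function.update e L (some (.lab L φ)), t, b⟩, .labStep L φ e t b,
      rfl, rfl, rfl, hv, ?_, hpat⟩
    intro L' χ hL'
    dsimp only at hL'
    rcases eq_or_ne L' L with rfl | hne
    · rw [Function.update_self] at hL'
      injection hL' with hL'
      rw [← hL']
      exact hv
    · rw [Function.update_of_ne hne] at hL'
      exact hev L' χ hL'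
  | claimStep L e s b χ h =>
    exact ⟨⟨χ, e, t, b⟩, .claimStep L e t b χ h, rfl, rfl, rfl, hev L χ h, hev, hpat⟩

end Part1

namespace Part1

theorem main :
    ¬ ∃ φ : SCLFormula emptyVocab, φ.freeVars = ∅ ∧
        ∀ M : Struct.{u} emptyVocab,
          ((∀ s : ℕ → M.Dom, SCLTrue M s φ) ↔ Finite M.Dom) := by
  classical
  rintro ⟨φ, -, h⟩
  set W : Finset ℕ := φ.vars with hW
  set k : ℕ := W.card with hk
  let MA : Struct.{u} emptyVocab :=
    ⟨ULift (Fin (k + 1)), ⟨ULift.up 0⟩, fun R => R.elim⟩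
  let MB : Struct.{u} emptyVocab := ⟨ULift ℕ, ⟨ULift.up 0⟩, fun R => R.elim⟩
  have hAfin : Finite MA.Dom := inferInstanceAs (Finite (ULift (Fin (k + 1))))
  have hBinf : Infinite MB.Dom := inferInstanceAs (Infinite (ULift ℕ))
  have hA : ∀ s : ℕ → MA.Dom, SCLTrue MA s φ := (h MA).mpr hAfin
  have hBnot : ¬ ∀ s : ℕ → MB.Dom, SCLTrue MB s φ := by
    intro hB
    exact absurd ((h MB).mp hB) (Finite.not_infinite · hBinf)
  rw [not_forall] at hBnot
  obtain ⟨t, ht⟩ := hBnot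
  -- build an assignment in `MA` with the same equality pattern on `W` as `t`
  obtain ⟨fInj⟩ : Nonempty ({ x // x ∈ W.image t } ↪ MA.Dom) := by
    apply Function.Embedding.nonempty_of_card_le
    calc Fintype.card { x // x ∈ W.image t } = (W.image t).card := Fintype.card_coe _
      _ ≤ W.card := Finset.card_image_le
      _ ≤ k + 1 := by omega
      _ = Fintype.card (ULift (Fin (k + 1))) := by simp
  set s : ℕ → MA.Dom := fun x =>
    if hx : x ∈ W then fInj ⟨t x, Finset.mem_image_of_mem t hx⟩
    else Classical.arbitrary MA.Dom with hs
  have hpat : ∀ x ∈ W, ∀ y ∈ W, (s x = s y ↔ t x = t y) := by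
    intro x hx y hy
    rw [hs]
    simp only [dif_pos hx, dif_pos hy]
    rw [fInj.apply_eq_iff_eq]
    exact ⟨fun hh => congrArg Subtype.val hh, fun hh => Subtype.ext hh⟩
  have hR0 : PRel W (initPos φ s) (initPos φ t) := by
    refine ⟨rfl, rfl, rfl, ?_, ?_, hpat⟩
    · exact Finset.Subset.refl _
    · intro L χ hL
      cases hL
  have hfreshB : ∀ G : Finset MB.Dom, G.card < W.card → ∃ b, b ∉ G :=
    fun G _ => Infinite.exists_notMem_finset G
  have hfreshA : ∀ G : Finset MA.Dom, G.card < W.card → ∃ b, b ∉ G := by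
    intro G hG
    by_contra hn
    push_neg at hn
    have hu : G = Finset.univ := Finset.eq_univ_iff_forall.mpr hn
    rw [hu, Finset.card_univ] at hG
    simp only [MA, Fintype.card_ulift, Fintype.card_fin] at hG
    omega
  apply ht
  obtain ⟨σ, hσ⟩ := hA s
  exact Sim.transfer (A := gameU MA) (B := gameU MB) (R := PRel W)
    (fun p q hR => rel_turn hR)
    (fun p q pl hR => rel_win hR pl)
    (fun p q hR => rel_dead hR)
    (fun p q p' hR hs' => rel_step hfreshB hR p' hs')
    (fun p q q' hR hs' => by
      obtain ⟨p', h1, h2⟩ := rel_step hfreshA hR.swap q' hs'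
      exact ⟨p', h1, h2.swap⟩)
    hR0 hσ

end Part1

/-- The class of finite structures over the empty
vocabulary is not definable in SCL (unbounded semantics), although it is
definable in universal second-order logic; hence SCL is strictly less
expressive than ∀SO. -/
theorem finiteness_not_definable_in_SCL :
    (¬ ∃ φ : SCLFormula emptyVocab, φ.freeVars = ∅ ∧
        ∀ M : Struct.{u} emptyVocab,
          ((∀ s : ℕ → M.Dom, SCLTrue M s φ) ↔ Finite M.Dom)) ∧
    (∃ (N : Type) (_ : Finite N) (na : N → ℕ)
        (Θ : SCLFormula (extVocab emptyVocab N na)),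
        Θ.IsFO ∧ Θ.freeVars = ∅ ∧
        ∀ M : Struct.{u} emptyVocab,
          (Finite M.Dom ↔
            ∀ J : ∀ n : N, (Fin (na n) → M.Dom) → Prop,
              ∀ s : ℕ → M.Dom, FOSat (expand M J) s Θ)) := by
  constructor
  · exact Part1.main
  · exact ⟨Unit, inferInstance, fun _ => 2, Part2.Theta, Part2.theta_isFO,
      Part2.theta_freeVars, Part2.part2_main⟩
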